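/- arXiv:0903.5269 — 2 statements merged into one kernel-verified Lean document; each statement's English description precedes it below -/
import Mathlib

section
/- Let R ∈ 𝔯(V) be such that R* ∈ 𝔯(V) as well. Then: (1) α_j(R*) = α_j(R) = (α_j(R))* for j = 1, 2, 6; (2) α₃(R*) = (α₃(R))* = −α₃(R); (3) α_j(R*) = −α_j(R) for j = 4, 7; (4) α_j(R*) = 0 = α_j(R) for j = 5, 8. -/
open scoped BigOperators
open Pointwise

namespace GCT

variable {V : Type*} [AddCommGroup V] [Module ℝ V]

/-- Linearity of a real valued function of one vector variable. -/
def IsLin (f : V → ℝ) : Prop :=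
  (∀ x y : V, f (x + y) = f x + f y) ∧ (∀ (c : ℝ) (x : V), f (c • x) = c * f x)

/-- Bilinearity. -/
def IsBilin (h : V → V → ℝ) : Prop :=
  (∀ y, IsLin (fun x => h x y)) ∧ (∀ x, IsLin (fun y => h x y))

/-- 4-linearity. -/
def IsMulti4 (F : V → V → V → V → ℝ) : Prop :=
  (∀ y z w, IsLin (fun x => F x y z w)) ∧ (∀ x z w, IsLin (fun y => F x y z w)) ∧
    (∀ x y w, IsLin (fun z => F x y z w)) ∧ (∀ x y z, IsLin (fun w => F x y z w))

/-- The space 𝔯(V) of generalized curvature tensors. -/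
def rSet (V : Type*) [AddCommGroup V] [Module ℝ V] : Set (V → V → V → V → ℝ) :=
  {F | IsMulti4 F ∧ (∀ x y z w, F x y z w = - F y x z w) ∧
    (∀ x y z w, F x y z w + F y z x w + F z x y w = 0)}

/-- The space 𝔞(V) of algebraic curvature tensors. -/
def aSet (V : Type*) [AddCommGroup V] [Module ℝ V] : Set (V → V → V → V → ℝ) :=
  {F | F ∈ rSet V ∧ ∀ x y z w, F x y z w = - F x y w z}

/-- The space 𝔰(V). -/
def sSet (V : Type*) [AddCommGroup V] [Module ℝ V] : Set (V → V → V → V → ℝ) :=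
  {F | F ∈ rSet V ∧ ∀ x y z w, F x y z w = F x y w z}

/-- The conjugate tensor R*. -/
def conj (F : V → V → V → V → ℝ) : V → V → V → V → ℝ := fun x y z w => - F x y w z

/-- The product h·k of two bilinear forms. -/
def prodB (h k : V → V → ℝ) : V → V → V → V → ℝ := fun x y z w => h x y * k z w

/-- The wedge product h ∧_t k of two bilinear forms. -/
def wedge (t : ℝ) (h k : V → V → ℝ) : V → V → V → V → ℝ :=
  fun x y z w => h x z * k y w - h y z * k x w - t * (h x w * k y z - h y w * k x z)

/-- Antisymmetric part Λh. -/
noncomputable def lamB (h : V → V → ℝ) : V → V → ℝ := fun x y => (h x y - h y x) / 2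

/-- Symmetric part Sh. -/
noncomputable def symB (h : V → V → ℝ) : V → V → ℝ := fun x y => (h x y + h y x) / 2

/-- The idempotent ψ. -/
noncomputable def psi (F : V → V → V → V → ℝ) : V → V → V → V → ℝ :=
  fun x y z w => (F x y z w + F y x w z + F z w x y + F w z y x) / 4

/-- The idempotent μ. -/
noncomputable def mu (F : V → V → V → V → ℝ) : V → V → V → V → ℝ :=
  fun x y z w =>
    (3 * F x y z w + 3 * F x y w z + F x w z y + F x z w y + F w y z x + F z y w x) / 8

/-- A linear equivalence is a g-isometry. -/
def IsIsometry (g : V → V → ℝ) (φ : V ≃ₗ[ℝ] V) : Prop := ∀ x y, g (φ x) (φ y) = g x y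

/-- Pull back of a 4-tensor along a linear equivalence (the natural action). -/
def pullT (φ : V ≃ₗ[ℝ] V) (F : V → V → V → V → ℝ) : V → V → V → V → ℝ :=
  fun x y z w => F (φ x) (φ y) (φ z) (φ w)

/-- Invariance of a set of 4-tensors under the orthogonal group O(V,g). -/
def OInv (g : V → V → ℝ) (S : Set (V → V → V → V → ℝ)) : Prop :=
  ∀ φ : V ≃ₗ[ℝ] V, IsIsometry g φ → ∀ F ∈ S, pullT φ F ∈ S

/-- Irreducibility of a subspace of 4-tensors as an O(V,g)-module:
there is no proper nonzero invariant subspace. -/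
def OIrred (g : V → V → ℝ) (W : Set (V → V → V → V → ℝ)) : Prop :=
  ∀ U : Submodule ℝ (V → V → V → V → ℝ), (U : Set (V → V → V → V → ℝ)) ⊆ W →
    (∀ φ : V ≃ₗ[ℝ] V, IsIsometry g φ → ∀ F ∈ U, pullT φ F ∈ U) →
    (U : Set (V → V → V → V → ℝ)) = {0} ∨ (U : Set (V → V → V → V → ℝ)) = W

/-- Isomorphism of two invariant subspaces as O(V,g)-modules. -/
def OEquivMod (g : V → V → ℝ) (S T : Set (V → V → V → V → ℝ)) : Prop :=
  ∃ e : (V → V → V → V → ℝ) →ₗ[ℝ] (V → V → V → V → ℝ),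
    Set.BijOn e S T ∧
      ∀ φ : V ≃ₗ[ℝ] V, IsIsometry g φ → ∀ F ∈ S, e (pullT φ F) = pullT φ (e F)

variable (n : ℕ) (b : Module.Basis (Fin n) ℝ V) (g : V → V → ℝ)

/-- Inverse metric components g^{ij}. -/
noncomputable def ginv : Matrix (Fin n) (Fin n) ℝ :=
  (Matrix.of fun i j => g (b i) (b j))⁻¹

/-- Ric(R)(x,y) := Σ g^{ij} R(e_i,x,y,e_j). -/
noncomputable def Ric (F : V → V → V → V → ℝ) : V → V → ℝ :=
  fun x y => ∑ i, ∑ j, ginv n b g i j * F (b i) x y (b j)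

/-- Ric*(R)(x,y) := Σ g^{ij} R(x,e_i,e_j,y). -/
noncomputable def RicS (F : V → V → V → V → ℝ) : V → V → ℝ :=
  fun x y => ∑ i, ∑ j, ginv n b g i j * F x (b i) (b j) y

/-- The generalized scalar curvature τ(R). -/
noncomputable def tau (F : V → V → V → V → ℝ) : ℝ :=
  ∑ i, ∑ j, ∑ k, ∑ l, ginv n b g i l * ginv n b g j k * F (b i) (b j) (b k) (b l)

/-- The g-trace of a bilinear form. -/
noncomputable def trg (h : V → V → ℝ) : ℝ := ∑ i, ∑ j, ginv n b g i j * h (b i) (b j)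

/-- The scalar product on 4-tensors given by full contraction with g. -/
noncomputable def inner4 (F T : V → V → V → V → ℝ) : ℝ :=
  ∑ i, ∑ j, ∑ k, ∑ l, ∑ i', ∑ j', ∑ k', ∑ l',
    ginv n b g i i' * ginv n b g j j' * ginv n b g k k' * ginv n b g l l' *
      F (b i) (b j) (b k) (b l) * T (b i') (b j') (b k') (b l')

/-- W-projection π₁. -/
noncomputable def pi1 (F : V → V → V → V → ℝ) : V → V → V → V → ℝ :=
  (-(tau n b g F) / ((n : ℝ) * ((n : ℝ) - 1))) • wedge 0 g g

/-- W-projection π₂. -/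
noncomputable def pi2 (F : V → V → V → V → ℝ) : V → V → V → V → ℝ :=
  ((1 : ℝ) / ((n : ℝ) - 1)) • wedge 0 (((tau n b g F) / (n : ℝ)) • g - symB (Ric n b g F)) g

/-- W-projection π₃. -/
noncomputable def pi3 (F : V → V → V → V → ℝ) : V → V → V → V → ℝ :=
  ((-1 : ℝ) / ((n : ℝ) + 1)) •
    ((2 : ℝ) • prodB (lamB (Ric n b g F)) g + wedge 0 (lamB (Ric n b g F)) g)

/-- W-projection π₄. -/
noncomputable def pi4 (F : V → V → V → V → ℝ) : V → V → V → V → ℝ :=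
  ((-1 : ℝ) / ((n : ℝ) ^ 2 - 4)) •
      ((2 : ℝ) • prodB (lamB (RicS n b g F)) g + wedge ((n : ℝ) + 1) (lamB (RicS n b g F)) g)
    - ((3 : ℝ) / (((n : ℝ) ^ 2 - 4) * ((n : ℝ) + 1))) •
      ((2 : ℝ) • prodB (lamB (Ric n b g F)) g + wedge ((n : ℝ) + 1) (lamB (Ric n b g F)) g)

/-- W-projection π₅. -/
noncomputable def pi5 (F : V → V → V → V → ℝ) : V → V → V → V → ℝ :=
  ((1 : ℝ) / (((n : ℝ) - 1) * ((n : ℝ) - 2))) •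
    ((tau n b g F) • wedge 0 g g -
      ((1 : ℝ) / (n : ℝ)) •
        wedge ((n : ℝ) - 1) (symB (Ric n b g F + ((n : ℝ) - 1) • RicS n b g F)) g)

/-- W-projection π₆. -/
noncomputable def pi6 (F : V → V → V → V → ℝ) : V → V → V → V → ℝ :=
  psi F + ((1 : ℝ) / (2 * ((n : ℝ) - 2))) • wedge 1 (symB (Ric n b g F + RicS n b g F)) g
    - ((tau n b g F) / (((n : ℝ) - 1) * ((n : ℝ) - 2))) • wedge 0 g g

/-- W-projection π₇. -/
noncomputable def pi7 (F : V → V → V → V → ℝ) : V → V → V → V → ℝ :=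
  mu F + ((1 : ℝ) / (2 * (n : ℝ))) • wedge (-1) (symB (Ric n b g F - RicS n b g F)) g
    + ((1 : ℝ) / (2 * ((n : ℝ) + 2))) • prodB (lamB ((3 : ℝ) • Ric n b g F - RicS n b g F)) g
    + ((1 : ℝ) / (4 * ((n : ℝ) + 2))) • wedge (-1) (lamB ((3 : ℝ) • Ric n b g F - RicS n b g F)) g

/-- W-projection π₈. -/
noncomputable def pi8 (F : V → V → V → V → ℝ) : V → V → V → V → ℝ :=
  F - psi F - mu F
    + ((1 : ℝ) / (2 * ((n : ℝ) - 2))) • prodB (lamB (Ric n b g F + RicS n b g F)) g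
    + ((1 : ℝ) / (4 * ((n : ℝ) - 2))) • wedge 3 (lamB (Ric n b g F + RicS n b g F)) g

/-- A-projection α₁. -/
noncomputable def al1 (F : V → V → V → V → ℝ) : V → V → V → V → ℝ :=
  (-(tau n b g F) / ((n : ℝ) * ((n : ℝ) - 1))) • wedge 0 g g

/-- A-projection α₂. -/
noncomputable def al2 (F : V → V → V → V → ℝ) : V → V → V → V → ℝ :=
  ((-1 : ℝ) / (2 * ((n : ℝ) - 2))) • wedge 1 (symB (Ric n b g F + RicS n b g F)) g
    + ((2 * tau n b g F) / ((n : ℝ) * ((n : ℝ) - 2))) • wedge 0 g g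

/-- A-projection α₃. -/
noncomputable def al3 (F : V → V → V → V → ℝ) : V → V → V → V → ℝ :=
  ((-1 : ℝ) / (2 * (n : ℝ))) • wedge (-1) (symB (Ric n b g F - RicS n b g F)) g

/-- A-projection α₄. -/
noncomputable def al4 (F : V → V → V → V → ℝ) : V → V → V → V → ℝ :=
  ((-1 : ℝ) / (4 * ((n : ℝ) + 2))) •
    ((2 : ℝ) • prodB (lamB ((3 : ℝ) • Ric n b g F - RicS n b g F)) g
      + wedge (-1) (lamB ((3 : ℝ) • Ric n b g F - RicS n b g F)) g)

/-- A-projection α₅. -/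
noncomputable def al5 (F : V → V → V → V → ℝ) : V → V → V → V → ℝ :=
  ((-1 : ℝ) / (4 * ((n : ℝ) - 2))) •
    ((2 : ℝ) • prodB (lamB (Ric n b g F + RicS n b g F)) g
      + wedge 3 (lamB (Ric n b g F + RicS n b g F)) g)

/-- A-projection α₆. -/
noncomputable def al6 (F : V → V → V → V → ℝ) : V → V → V → V → ℝ :=
  psi F - al1 n b g F - al2 n b g F

/-- A-projection α₇. -/
noncomputable def al7 (F : V → V → V → V → ℝ) : V → V → V → V → ℝ :=
  mu F - al3 n b g F - al4 n b g F

/-- A-projection α₈. -/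
noncomputable def al8 (F : V → V → V → V → ℝ) : V → V → V → V → ℝ :=
  F - mu F - psi F - al5 n b g F

/-- Curvature tensors of constant curvature type. -/
noncomputable def uSet : Set (V → V → V → V → ℝ) :=
  {F | ∃ c : ℝ, ∀ x y z w, F x y z w = c * (g x w * g y z - g x z * g y w)}

/-- Ricci traceless algebraic curvature tensors built from a traceless symmetric form. -/
noncomputable def zSet : Set (V → V → V → V → ℝ) :=
  {F | ∃ Xi : V → V → ℝ, IsBilin Xi ∧ (∀ x y, Xi x y = Xi y x) ∧ trg n b g Xi = 0 ∧
    ∀ x y z w, F x y z w = Xi x w * g y z + g x w * Xi y z - Xi x z * g y w - g x z * Xi y w}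

/-- Weyl type (Ricci flat algebraic) curvature tensors. -/
noncomputable def wSet : Set (V → V → V → V → ℝ) :=
  {F | F ∈ aSet V ∧ Ric n b g F = fun _ _ => 0}

/-- The projective curvature tensor p(R). -/
noncomputable def pProj (F : V → V → V → V → ℝ) : V → V → V → V → ℝ :=
  F - pi1 n b g F - pi2 n b g F - pi3 n b g F


section AuxProof

lemma aux_psi_conj (F : V → V → V → V → ℝ) (hA : ∀ x y z w, F x y z w = - F y x z w) :
    psi (conj F) = psi F := by
  funext x y z w
  simp only [psi, conj]
  linear_combination (-(1:ℝ)/4) * hA x y z w + (-(1:ℝ)/4) * hA x y w z +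
    (-(1:ℝ)/4) * hA z w x y + (-(1:ℝ)/4) * hA z w y x

lemma aux_conj_psi (F : V → V → V → V → ℝ) (hA : ∀ x y z w, F x y z w = - F y x z w) :
    conj (psi F) = psi F := by
  funext x y z w
  simp only [psi, conj]
  linear_combination (-(1:ℝ)/4) * hA x y z w + (-(1:ℝ)/4) * hA x y w z +
    (-(1:ℝ)/4) * hA z w x y + (-(1:ℝ)/4) * hA z w y x

lemma aux_mu_conj (F : V → V → V → V → ℝ) (hA : ∀ x y z w, F x y z w = - F y x z w)
    (hB1 : ∀ x y z w, F x y z w + F y z x w + F z x y w = 0)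
    (hB2 : ∀ x y z w, F x y w z + F y z w x + F z x w y = 0) :
    mu (conj F) = - mu F := by
  funext x y z w
  simp only [mu, conj, Pi.neg_apply]
  linear_combination (-(1:ℝ)/8) * hA x z y w + ((1:ℝ)/8) * hA x z w y +
    (-(1:ℝ)/8) * hA x w y z + ((1:ℝ)/8) * hA x w z y + (-(1:ℝ)/8) * hA y z x w +
    ((1:ℝ)/8) * hA y z w x + (-(1:ℝ)/8) * hA y w x z + ((1:ℝ)/8) * hA y w z x +
    ((1:ℝ)/8) * hB1 x y z w + (-(1:ℝ)/8) * hB2 x y z w +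
    ((1:ℝ)/8) * hB1 x y w z + (-(1:ℝ)/8) * hB2 x y w z

lemma aux_mu_psi (F : V → V → V → V → ℝ) (hA : ∀ x y z w, F x y z w = - F y x z w)
    (hB1 : ∀ x y z w, F x y z w + F y z x w + F z x y w = 0)
    (hB2 : ∀ x y z w, F x y w z + F y z w x + F z x w y = 0) :
    mu F + psi F = F := by
  funext x y z w
  simp only [Pi.add_apply, mu, psi]
  linear_combination ((1:ℝ)/4) * hA x y w z + (-(1:ℝ)/8) * hA x z w y +
    ((1:ℝ)/8) * hA x w z y + ((1:ℝ)/8) * hA y z w x + ((3:ℝ)/8) * hA y w z x +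
    ((1:ℝ)/4) * hA z w y x + ((1:ℝ)/8) * hB2 x y z w + (-(3:ℝ)/8) * hB2 x y w z +
    ((1:ℝ)/4) * hB1 x z w y + (-(1:ℝ)/4) * hB1 y z w x

lemma aux_ginv_symm (hgs : ∀ x y, g x y = g y x) (i j : Fin n) :
    ginv n b g i j = ginv n b g j i := by
  have hM : (Matrix.of fun i j => g (b i) (b j)).transpose
      = (Matrix.of fun i j => g (b i) (b j)) := by
    ext p q
    simp only [Matrix.transpose_apply, Matrix.of_apply]
    exact hgs (b q) (b p)
  simp only [ginv]
  conv_rhs => rw [← hM, ← Matrix.transpose_nonsing_inv]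
  rw [Matrix.transpose_apply]

lemma aux_ric_conj (F : V → V → V → V → ℝ) (hA : ∀ x y z w, F x y z w = - F y x z w) :
    Ric n b g (conj F) = RicS n b g F := by
  funext x y
  simp only [Ric, RicS, conj]
  refine Finset.sum_congr rfl fun i _ => Finset.sum_congr rfl fun j _ => ?_
  linear_combination (-(ginv n b g i j)) * hA (b i) x (b j) y

lemma aux_ricS_conj (F : V → V → V → V → ℝ) (hA : ∀ x y z w, F x y z w = - F y x z w) :
    RicS n b g (conj F) = Ric n b g F := by
  funext x y
  simp only [Ric, RicS, conj]
  refine Finset.sum_congr rfl fun i _ => Finset.sum_congr rfl fun j _ => ?_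
  linear_combination (-(ginv n b g i j)) * hA x (b i) y (b j)

lemma aux_tau_conj (F : V → V → V → V → ℝ) (hA : ∀ x y z w, F x y z w = - F y x z w) :
    tau n b g (conj F) = tau n b g F := by
  simp only [tau, conj]
  have step1 : (∑ i, ∑ j, ∑ k, ∑ l,
        ginv n b g i l * ginv n b g j k * - F (b i) (b j) (b l) (b k))
      = ∑ i, ∑ j, ∑ k, ∑ l,
        ginv n b g i l * ginv n b g j k * F (b j) (b i) (b l) (b k) := by
    refine Finset.sum_congr rfl fun i _ => Finset.sum_congr rfl fun j _ =>
      Finset.sum_congr rfl fun k _ => Finset.sum_congr rfl fun l _ => ?_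
    linear_combination (-(ginv n b g i l * ginv n b g j k)) * hA (b i) (b j) (b l) (b k)
  rw [step1]
  conv_lhs => rw [Finset.sum_comm]
  refine Finset.sum_congr rfl fun p _ => Finset.sum_congr rfl fun q _ => ?_
  conv_lhs => rw [Finset.sum_comm]
  refine Finset.sum_congr rfl fun r _ => Finset.sum_congr rfl fun s _ => ?_
  ring

lemma aux_swap_last (hsym : ∀ i j, ginv n b g i j = ginv n b g j i)
    (F : V → V → V → V → ℝ) (x y : V) :
    (∑ i, ∑ j, ginv n b g i j * F x y (b j) (b i))
      = ∑ i, ∑ j, ginv n b g i j * F x y (b i) (b j) := by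
  conv_lhs => rw [Finset.sum_comm]
  refine Finset.sum_congr rfl fun p _ => Finset.sum_congr rfl fun q _ => ?_
  rw [hsym q p]

lemma aux_ric_diff (F : V → V → V → V → ℝ) (hA : ∀ x y z w, F x y z w = - F y x z w)
    (hB1 : ∀ x y z w, F x y z w + F y z x w + F z x y w = 0) (x y : V) :
    Ric n b g F x y - Ric n b g F y x
      = -∑ i, ∑ j, ginv n b g i j * F x y (b i) (b j) := by
  simp only [Ric]
  rw [← Finset.sum_sub_distrib, ← Finset.sum_neg_distrib]
  refine Finset.sum_congr rfl fun i _ => ?_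
  rw [← Finset.sum_sub_distrib, ← Finset.sum_neg_distrib]
  refine Finset.sum_congr rfl fun j _ => ?_
  linear_combination (ginv n b g i j) * hB1 (b i) x y (b j) -
    (ginv n b g i j) * hA y (b i) x (b j)

lemma aux_ricS_diff (F : V → V → V → V → ℝ) (hA : ∀ x y z w, F x y z w = - F y x z w)
    (hB2 : ∀ x y z w, F x y w z + F y z w x + F z x w y = 0)
    (hsym : ∀ i j, ginv n b g i j = ginv n b g j i) (x y : V) :
    RicS n b g F x y - RicS n b g F y x
      = ∑ i, ∑ j, ginv n b g i j * F x y (b i) (b j) := by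
  have h1 : RicS n b g F x y - RicS n b g F y x
      = ∑ i, ∑ j, ginv n b g i j * F x y (b j) (b i) := by
    simp only [RicS]
    rw [← Finset.sum_sub_distrib]
    refine Finset.sum_congr rfl fun i _ => ?_
    rw [← Finset.sum_sub_distrib]
    refine Finset.sum_congr rfl fun j _ => ?_
    linear_combination (ginv n b g i j) * hB2 x (b i) y (b j) -
      (ginv n b g i j) * hA (b i) y (b j) x - (ginv n b g i j) * hA y x (b j) (b i)
  rw [h1, aux_swap_last n b g hsym]

end AuxProof

theorem stmt15 {V : Type*} [AddCommGroup V] [Module ℝ V]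
    (n : ℕ) (hn : 3 ≤ n) (b : Module.Basis (Fin n) ℝ V)
    (g : V → V → ℝ) (hgb : IsBilin g) (hgs : ∀ x y, g x y = g y x)
    (hgnd : ∀ x : V, (∀ y : V, g x y = 0) → x = 0) :
    ∀ F ∈ rSet V, conj F ∈ rSet V →
      (al1 n b g (conj F) = al1 n b g F ∧ al1 n b g F = conj (al1 n b g F)) ∧
      (al2 n b g (conj F) = al2 n b g F ∧ al2 n b g F = conj (al2 n b g F)) ∧
      (al6 n b g (conj F) = al6 n b g F ∧ al6 n b g F = conj (al6 n b g F)) ∧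
      (al3 n b g (conj F) = conj (al3 n b g F) ∧ conj (al3 n b g F) = - al3 n b g F) ∧
      al4 n b g (conj F) = - al4 n b g F ∧
      al7 n b g (conj F) = - al7 n b g F ∧
      (al5 n b g (conj F) = 0 ∧ al5 n b g F = 0) ∧
      (al8 n b g (conj F) = 0 ∧ al8 n b g F = 0) := by
  intro F hF hFc
  have hA : ∀ x y z w, F x y z w = - F y x z w := hF.2.1
  have hB1 : ∀ x y z w, F x y z w + F y z x w + F z x y w = 0 := hF.2.2
  have hB2 : ∀ x y z w, F x y w z + F y z w x + F z x w y = 0 := by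
    intro x y z w
    have h := hFc.2.2 x y z w
    simp only [conj] at h
    linarith
  have hAc : ∀ x y z w, conj F x y z w = - conj F y x z w := hFc.2.1
  have hB1c : ∀ x y z w, conj F x y z w + conj F y z x w + conj F z x y w = 0 := hFc.2.2
  have hB2c : ∀ x y z w, conj F x y w z + conj F y z w x + conj F z x w y = 0 := by
    intro x y z w
    simp only [conj]
    linarith [hB1 x y z w]
  have hsym : ∀ i j, ginv n b g i j = ginv n b g j i := fun i j => aux_ginv_symm n b g hgs i j
  have hRc : Ric n b g (conj F) = RicS n b g F := aux_ric_conj n b g F hA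
  have hRSc : RicS n b g (conj F) = Ric n b g F := aux_ricS_conj n b g F hA
  have htau : tau n b g (conj F) = tau n b g F := aux_tau_conj n b g F hA
  have hS : ∀ x y, Ric n b g F x y + RicS n b g F x y
      = Ric n b g F y x + RicS n b g F y x := by
    intro x y
    have e1 := aux_ric_diff n b g F hA hB1 x y
    have e2 := aux_ricS_diff n b g F hA hB2 hsym x y
    linarith
  have hpsiC : psi (conj F) = psi F := aux_psi_conj F hA
  have hpsiS : conj (psi F) = psi F := aux_conj_psi F hA
  have hmuC : mu (conj F) = - mu F := aux_mu_conj F hA hB1 hB2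
  have hmp : mu F + psi F = F := aux_mu_psi F hA hB1 hB2
  have hmpc : mu (conj F) + psi (conj F) = conj F := aux_mu_psi (conj F) hAc hB1c hB2c
  -- α₁
  have h1a : al1 n b g (conj F) = al1 n b g F := by
    simp only [al1]; rw [htau]
  have h1b : al1 n b g F = conj (al1 n b g F) := by
    funext x y z w
    simp only [al1, conj, wedge, Pi.smul_apply, smul_eq_mul]
    ring
  -- α₂
  have h2a : al2 n b g (conj F) = al2 n b g F := by
    simp only [al2]
    rw [htau, hRc, hRSc, add_comm (RicS n b g F) (Ric n b g F)]
  have h2b : al2 n b g F = conj (al2 n b g F) := by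
    funext x y z w
    simp only [al2, conj, wedge, Pi.smul_apply, Pi.add_apply, smul_eq_mul]
    ring
  -- α₆
  have h6a : al6 n b g (conj F) = al6 n b g F := by
    simp only [al6]; rw [hpsiC, h1a, h2a]
  have hconj_sub : ∀ (A B : V → V → V → V → ℝ), conj (A - B) = conj A - conj B := by
    intro A B
    funext x y z w
    simp only [conj, Pi.sub_apply]
    ring
  have h6b : al6 n b g F = conj (al6 n b g F) := by
    have hc6 : conj (al6 n b g F) = al6 n b g F := by
      calc conj (al6 n b g F)
          = conj (psi F) - conj (al1 n b g F) - conj (al2 n b g F) := by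
            simp only [al6, hconj_sub]
        _ = psi F - al1 n b g F - al2 n b g F := by rw [hpsiS, ← h1b, ← h2b]
        _ = al6 n b g F := by simp only [al6]
    exact hc6.symm
  -- α₃
  have h3b : conj (al3 n b g F) = - al3 n b g F := by
    funext x y z w
    simp only [al3, conj, wedge, symB, Pi.smul_apply, Pi.neg_apply, Pi.sub_apply, smul_eq_mul]
    ring
  have h3a' : al3 n b g (conj F) = - al3 n b g F := by
    simp only [al3]
    rw [hRc, hRSc]
    have hs : symB (RicS n b g F - Ric n b g F)
        = - symB (Ric n b g F - RicS n b g F) := by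
      funext x y
      simp only [symB, Pi.sub_apply, Pi.neg_apply]
      ring
    rw [hs]
    funext x y z w
    simp only [wedge, Pi.smul_apply, Pi.neg_apply, smul_eq_mul]
    ring
  have h3a : al3 n b g (conj F) = conj (al3 n b g F) := by rw [h3a', h3b]
  -- α₄
  have hlam4 : lamB ((3:ℝ) • RicS n b g F - Ric n b g F)
      = - lamB ((3:ℝ) • Ric n b g F - RicS n b g F) := by
    funext x y
    simp only [lamB, Pi.sub_apply, Pi.smul_apply, Pi.neg_apply, smul_eq_mul]
    linarith [hS x y]
  have h4 : al4 n b g (conj F) = - al4 n b g F := by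
    simp only [al4]
    rw [hRc, hRSc, hlam4]
    funext x y z w
    simp only [prodB, wedge, Pi.smul_apply, Pi.add_apply, Pi.neg_apply, smul_eq_mul]
    ring
  -- α₇
  have h7 : al7 n b g (conj F) = - al7 n b g F := by
    simp only [al7]
    rw [hmuC, h3a', h4]
    abel
  -- α₅
  have hlam5 : lamB (Ric n b g F + RicS n b g F) = 0 := by
    funext x y
    simp only [lamB, Pi.add_apply, Pi.zero_apply]
    linarith [hS x y]
  have h5b : al5 n b g F = 0 := by
    simp only [al5]
    rw [hlam5]
    funext x y z w
    simp only [prodB, wedge, Pi.smul_apply, Pi.add_apply, Pi.zero_apply, smul_eq_mul]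
    ring
  have h5a : al5 n b g (conj F) = 0 := by
    simp only [al5]
    rw [hRc, hRSc, add_comm (RicS n b g F) (Ric n b g F), hlam5]
    funext x y z w
    simp only [prodB, wedge, Pi.smul_apply, Pi.add_apply, Pi.zero_apply, smul_eq_mul]
    ring
  -- α₈
  have h8b : al8 n b g F = 0 := by
    simp only [al8]
    rw [h5b, sub_zero]
    linear_combination - hmp
  have h8a : al8 n b g (conj F) = 0 := by
    simp only [al8]
    rw [h5a, sub_zero]
    linear_combination - hmpc
  exact ⟨⟨h1a, h1b⟩, ⟨h2a, h2b⟩, ⟨h6a, h6b⟩, ⟨h3a, h3b⟩, h4, h7, ⟨h5a, h5b⟩, ⟨h8a, h8b⟩⟩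

end GCT
end

section
/- With W_j := π_j(𝔯(V)) and A_j := α_j(𝔯(V)) the following equalities of subspaces hold: A₁ = W₁; W₂ + W₅ = A₂ + A₃ (and these sums are direct); W₃ + W₄ = A₄ + A₅ (and these sums are direct); A₆ = W₆; A₇ = W₇; A₈ = W₈. -/
open scoped BigOperators
open Pointwise

namespace GCT

variable {V : Type*} [AddCommGroup V] [Module ℝ V]

variable (n : ℕ) (b : Module.Basis (Fin n) ℝ V) (g : V → V → ℝ)

section Aux
open Matrix
set_option linter.unusedSectionVars false

variable {V : Type*} [AddCommGroup V] [Module ℝ V]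

lemma IsLin.map_zero {f : V → ℝ} (hf : IsLin f) : f 0 = 0 := by
  have := hf.2 0 0; simpa using this

lemma IsLin.map_sum' {ι : Type*} {f : V → ℝ} (hf : IsLin f) (s : Finset ι) (c : ι → ℝ)
    (v : ι → V) : f (∑ i ∈ s, c i • v i) = ∑ i ∈ s, c i * f (v i) := by
  classical
  induction s using Finset.induction_on with
  | empty => simpa using hf.map_zero
  | @insert a s hx ih =>
    rw [Finset.sum_insert hx, Finset.sum_insert hx, hf.1, hf.2, ih]

variable (n : ℕ) (b : Module.Basis (Fin n) ℝ V) (g : V → V → ℝ)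

/-- The Gram matrix. -/
noncomputable def GM : Matrix (Fin n) (Fin n) ℝ := Matrix.of fun i j => g (b i) (b j)

lemma ginv_eq_inv : ginv n b g = (GM n b g)⁻¹ := rfl

lemma GM_det_ne (hgb : IsBilin g) (hgs : ∀ x y, g x y = g y x)
    (hgnd : ∀ x : V, (∀ y : V, g x y = 0) → x = 0) : (GM n b g).det ≠ 0 := by
  intro h
  obtain ⟨v, hv0, hv⟩ := Matrix.exists_mulVec_eq_zero_iff.2 h
  set x : V := ∑ i, v i • b i with hx
  have hbx : ∀ i, g (b i) x = 0 := by
    intro i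
    have h1 : g (b i) x = ∑ j, v j * g (b i) (b j) := (hgb.2 (b i)).map_sum' _ _ _
    have h2 : (GM n b g).mulVec v i = ∑ j, v j * g (b i) (b j) := by
      simp [Matrix.mulVec, dotProduct, GM, mul_comm]
    rw [h1, ← h2, hv]; rfl
  have hyx : ∀ y, g x y = 0 := by
    intro y
    rw [hgs]
    have h1 : g y x = ∑ i, b.repr y i * g (b i) x := by
      conv_lhs => rw [← Module.Basis.sum_repr b y]
      exact IsLin.map_sum' (hgb.1 x) _ _ _
    rw [h1]
    simp [hbx]
  have hx0 : x = 0 := hgnd x hyx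
  have : ∀ i, v i = 0 := Fintype.linearIndependent_iff.1 b.linearIndependent v (hx ▸ hx0)
  exact hv0 (funext this)

variable (hgb : IsBilin g) (hgs : ∀ x y, g x y = g y x)
    (hgnd : ∀ x : V, (∀ y : V, g x y = 0) → x = 0)

include hgb hgs hgnd

lemma ginv_symm (i j : Fin n) : ginv n b g i j = ginv n b g j i := by
  have hGM : (GM n b g)ᵀ = GM n b g := by
    ext i j; exact (hgs (b i) (b j)).symm
  have : ((GM n b g)⁻¹)ᵀ = (GM n b g)⁻¹ := by
    rw [Matrix.transpose_nonsing_inv, hGM]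
  calc ginv n b g i j = ((GM n b g)⁻¹)ᵀ j i := rfl
  _ = (GM n b g)⁻¹ j i := by rw [this]
  _ = ginv n b g j i := rfl

lemma sum_ginv_mul_g (x : V) (i : Fin n) :
    ∑ j, ginv n b g i j * g x (b j) = b.repr x i := by
  have hx : ∀ j, g x (b j) = ∑ m, b.repr x m * g (b m) (b j) := by
    intro j
    conv_lhs => rw [← Module.Basis.sum_repr b x]
    exact IsLin.map_sum' (hgb.1 (b j)) _ _ _
  have key : ∑ j, ginv n b g i j * g x (b j)
      = ∑ m, b.repr x m * ∑ j, GM n b g m j * (GM n b g)⁻¹ j i := by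
    simp only [hx, Finset.mul_sum]
    rw [Finset.sum_comm]
    refine Finset.sum_congr rfl fun m _ => Finset.sum_congr rfl fun j _ => ?_
    rw [show ginv n b g i j = (GM n b g)⁻¹ j i from ginv_symm n b g hgb hgs hgnd i j]
    show (GM n b g)⁻¹ j i * (b.repr x m * g (b m) (b j))
        = b.repr x m * (g (b m) (b j) * (GM n b g)⁻¹ j i)
    ring
  rw [key]
  have hmm : ∀ m, ∑ j, GM n b g m j * (GM n b g)⁻¹ j i
      = if m = i then (1:ℝ) else 0 := by
    intro m
    rw [← Matrix.mul_apply, Matrix.mul_nonsing_inv _ (Ne.isUnit (GM_det_ne n b g hgb hgs hgnd)),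
      Matrix.one_apply]
  simp only [hmm, mul_ite, mul_one, mul_zero]
  simp

lemma contract₁ (k : V → V → ℝ) (hk : IsBilin k) (x y : V) :
    ∑ i, ∑ j, ginv n b g i j * (g x (b j) * k (b i) y) = k x y := by
  have h1 : ∀ i, ∑ j, ginv n b g i j * (g x (b j) * k (b i) y)
      = b.repr x i * k (b i) y := by
    intro i
    rw [← sum_ginv_mul_g n b g hgb hgs hgnd x i, Finset.sum_mul]
    exact Finset.sum_congr rfl fun j _ => by ring
  simp only [h1]
  conv_rhs => rw [← Module.Basis.sum_repr b x]
  exact (IsLin.map_sum' (hk.1 y) _ _ _).symm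

lemma contract₂ (k : V → V → ℝ) (hk : IsBilin k) (x y : V) :
    ∑ i, ∑ j, ginv n b g i j * (g x (b i) * k (b j) y) = k x y := by
  rw [Finset.sum_comm]
  calc ∑ p, ∑ q, ginv n b g q p * (g x (b q) * k (b p) y)
      = ∑ p, ∑ q, ginv n b g p q * (g x (b q) * k (b p) y) := by
        exact Finset.sum_congr rfl fun p _ => Finset.sum_congr rfl fun q _ => by
          rw [ginv_symm n b g hgb hgs hgnd]
  _ = k x y := contract₁ n b g hgb hgs hgnd k hk x y

lemma trg_g_eq : trg n b g g = (n : ℝ) := by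
  unfold trg
  have h1 : ∀ i, ∑ j, ginv n b g i j * g (b i) (b j)
      = ((GM n b g)⁻¹ * GM n b g) i i := by
    intro i
    rw [Matrix.mul_apply]
    exact Finset.sum_congr rfl fun j _ => by rw [hgs (b i) (b j)]; rfl
  simp only [h1]
  rw [Matrix.nonsing_inv_mul _ (Ne.isUnit (GM_det_ne n b g hgb hgs hgnd))]
  simp [Matrix.one_apply]

lemma trg_expand (k : V → V → ℝ) :
    trg n b g k = ∑ i, ∑ j, ginv n b g i j * k (b i) (b j) := rfl

lemma trg_comb (c1 c2 : ℝ) (k l : V → V → ℝ) :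
    trg n b g (fun x y => c1 * k x y + c2 * l x y)
      = c1 * trg n b g k + c2 * trg n b g l := by
  unfold trg
  simp only [Finset.mul_sum, ← Finset.sum_add_distrib]
  exact Finset.sum_congr rfl fun i _ => Finset.sum_congr rfl fun j _ => by ring

lemma trg_swap (k : V → V → ℝ) : trg n b g (fun x y => k y x) = trg n b g k := by
  unfold trg
  rw [Finset.sum_comm]
  exact Finset.sum_congr rfl fun p _ => Finset.sum_congr rfl fun q _ => by
    rw [ginv_symm n b g hgb hgs hgnd]

lemma trg_anti (k : V → V → ℝ) (hk : ∀ x y, k x y = - k y x) : trg n b g k = 0 := by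
  have h1 : trg n b g (fun x y => k y x) = trg n b g k :=
    trg_swap n b g hgb hgs hgnd k
  have h2 : trg n b g (fun x y => k y x) = - trg n b g k := by
    have : trg n b g (fun x y => k y x)
        = trg n b g (fun x y => (-1 : ℝ) * k x y + 0 * k x y) := by
      congr 1; funext x y; rw [hk y x]; ring
    rw [this, trg_comb n b g hgb hgs hgnd]; ring
  rw [h1] at h2; linarith

lemma tau_eq_trg_Ric (F : V → V → V → V → ℝ) :
    tau n b g F = trg n b g (Ric n b g F) := by
  have h1 : trg n b g (Ric n b g F)
      = ∑ k, ∑ i, ∑ l, ∑ j, ginv n b g k l * (ginv n b g i j * F (b i) (b k) (b l) (b j)) := by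
    unfold trg Ric
    simp only [Finset.mul_sum]
    exact Finset.sum_congr rfl fun k _ => Finset.sum_comm
  rw [h1, Finset.sum_comm]
  unfold tau
  exact Finset.sum_congr rfl fun i _ => Finset.sum_congr rfl fun k _ =>
    Finset.sum_congr rfl fun l _ => Finset.sum_congr rfl fun j _ => by ring

lemma trg_RicS_eq_tau (F : V → V → V → V → ℝ) :
    trg n b g (RicS n b g F) = tau n b g F := by
  have h1 : trg n b g (RicS n b g F)
      = ∑ k, ∑ l, ∑ i, ∑ j, ginv n b g k l * (ginv n b g i j * F (b k) (b i) (b j) (b l)) := by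
    unfold trg RicS
    simp only [Finset.mul_sum]
  have h2 : trg n b g (RicS n b g F)
      = ∑ k, ∑ i, ∑ j, ∑ l, ginv n b g k l * (ginv n b g i j * F (b k) (b i) (b j) (b l)) := by
    rw [h1]
    refine Finset.sum_congr rfl fun k _ => ?_
    rw [Finset.sum_comm]
    exact Finset.sum_congr rfl fun i _ => Finset.sum_comm
  rw [h2]
  unfold tau
  exact Finset.sum_congr rfl fun i _ => Finset.sum_congr rfl fun j _ =>
    Finset.sum_congr rfl fun k _ => Finset.sum_congr rfl fun l _ => by ring

end Aux

section Aux2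
open Matrix
set_option linter.unusedSectionVars false

variable {V : Type*} [AddCommGroup V] [Module ℝ V]

lemma isLin_comb (c1 c2 : ℝ) {f1 f2 : V → ℝ} (h1 : IsLin f1) (h2 : IsLin f2) :
    IsLin (fun x => c1 * f1 x + c2 * f2 x) := by
  constructor
  · intro x y; simp only [h1.1, h2.1]; ring
  · intro c x; simp only [h1.2, h2.2]; ring

lemma isBilin_comb (c1 c2 : ℝ) {k l : V → V → ℝ} (hk : IsBilin k) (hl : IsBilin l) :
    IsBilin (fun x y => c1 * k x y + c2 * l x y) :=
  ⟨fun y => isLin_comb c1 c2 (hk.1 y) (hl.1 y), fun x => isLin_comb c1 c2 (hk.2 x) (hl.2 x)⟩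

lemma isBilin_swap {k : V → V → ℝ} (hk : IsBilin k) : IsBilin (fun x y => k y x) :=
  ⟨fun y => hk.2 y, fun x => hk.1 x⟩

/-- The master tensor a·(h·g) + aa·(h ∧₀ g) + c·C(h). -/
noncomputable def TT (g : V → V → ℝ) (a aa c : ℝ) (h : V → V → ℝ) : V → V → V → V → ℝ :=
  fun x y z w => a * (h x y * g z w) + aa * (h x z * g y w - h y z * g x w)
    + c * (h x w * g y z - h y w * g x z)

variable (n : ℕ) (b : Module.Basis (Fin n) ℝ V) (g : V → V → ℝ)
variable (hgb : IsBilin g) (hgs : ∀ x y, g x y = g y x)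
    (hgnd : ∀ x : V, (∀ y : V, g x y = 0) → x = 0)

include hgb hgs hgnd

lemma isMulti4_TT (a aa c : ℝ) (h : V → V → ℝ) (hh : IsBilin h) :
    IsMulti4 (TT g a aa c h) := by
  refine ⟨fun y z w => ⟨fun u v => ?_, fun s u => ?_⟩,
          fun x z w => ⟨fun u v => ?_, fun s u => ?_⟩,
          fun x y w => ⟨fun u v => ?_, fun s u => ?_⟩,
          fun x y z => ⟨fun u v => ?_, fun s u => ?_⟩⟩ <;>
    simp only [TT]
  · simp only [(hh.1 y).1, (hh.1 z).1, (hh.1 w).1, (hgb.1 w).1, (hgb.1 z).1]; ring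
  · simp only [(hh.1 y).2, (hh.1 z).2, (hh.1 w).2, (hgb.1 w).2, (hgb.1 z).2]; ring
  · simp only [(hh.2 x).1, (hh.1 z).1, (hh.1 w).1, (hgb.1 w).1, (hgb.1 z).1]; ring
  · simp only [(hh.2 x).2, (hh.1 z).2, (hh.1 w).2, (hgb.1 w).2, (hgb.1 z).2]; ring
  · simp only [(hh.2 x).1, (hh.2 y).1, (hgb.1 w).1, (hgb.2 y).1, (hgb.2 x).1]; ring
  · simp only [(hh.2 x).2, (hh.2 y).2, (hgb.1 w).2, (hgb.2 y).2, (hgb.2 x).2]; ring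
  · simp only [(hh.2 x).1, (hh.2 y).1, (hgb.2 z).1, (hgb.2 y).1, (hgb.2 x).1]; ring
  · simp only [(hh.2 x).2, (hh.2 y).2, (hgb.2 z).2, (hgb.2 y).2, (hgb.2 x).2]; ring

lemma mem_rSet_TT_sym (aa c : ℝ) (h : V → V → ℝ) (hh : IsBilin h)
    (hsym : ∀ x y, h x y = h y x) : TT g 0 aa c h ∈ rSet V := by
  refine ⟨isMulti4_TT g hgb hgs hgnd 0 aa c h hh, fun x y z w => ?_, fun x y z w => ?_⟩ <;>
    simp only [TT]
  · ring
  · rw [hsym y x, hsym z x, hsym z y, hgs z x, hgs y x, hgs z y]; ring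

lemma mem_rSet_TT_anti (aa c : ℝ) (ω : V → V → ℝ) (hh : IsBilin ω)
    (hanti : ∀ x y, ω x y = - ω y x) : TT g (2*aa) aa c ω ∈ rSet V := by
  refine ⟨isMulti4_TT g hgb hgs hgnd (2*aa) aa c ω hh, fun x y z w => ?_, fun x y z w => ?_⟩ <;>
    simp only [TT]
  · rw [hanti y x]; ring
  · rw [hanti y x, hanti z x, hanti z y, hgs z x, hgs y x, hgs z y]; ring

lemma Ric_TT (a aa c : ℝ) (h : V → V → ℝ) (hh : IsBilin h) (x y : V) :
    Ric n b g (TT g a aa c h) x y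
      = a * h y x + aa * (h x y - n * h x y)
        + c * (trg n b g h * g x y - h x y) := by
  have e1 : ∑ i, ∑ j, ginv n b g i j * (g y (b j) * h (b i) x) = h y x :=
    contract₁ n b g hgb hgs hgnd h hh y x
  have e2 : ∑ i, ∑ j, ginv n b g i j * (g x (b j) * h (b i) y) = h x y :=
    contract₁ n b g hgb hgs hgnd h hh x y
  have e3 : ∑ i, ∑ j, ginv n b g i j * g (b i) (b j) = (n : ℝ) :=
    trg_g_eq n b g hgb hgs hgnd
  have e4 : ∑ i, ∑ j, ginv n b g i j * h (b i) (b j) = trg n b g h := rfl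
  have e5 : ∑ i, ∑ j, ginv n b g i j * (g y (b i) * h x (b j)) = h x y :=
    contract₂ n b g hgb hgs hgnd (fun p q => h q p) (isBilin_swap hh) y x
  calc Ric n b g (TT g a aa c h) x y
      = ∑ i, ∑ j, (a * (ginv n b g i j * (g y (b j) * h (b i) x))
          + aa * (ginv n b g i j * (g x (b j) * h (b i) y))
          - aa * h x y * (ginv n b g i j * g (b i) (b j))
          + c * g x y * (ginv n b g i j * h (b i) (b j))
          - c * (ginv n b g i j * (g y (b i) * h x (b j)))) := by
        unfold Ric TT
        refine Finset.sum_congr rfl fun i _ => Finset.sum_congr rfl fun j _ => ?_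
        rw [hgs (b i) y]
        ring
  _ = a * h y x + aa * (h x y - n * h x y) + c * (trg n b g h * g x y - h x y) := by
        simp only [Finset.sum_add_distrib, Finset.sum_sub_distrib, ← Finset.mul_sum]
        rw [e1, e2, e3, e4, e5]
        ring

lemma RicS_TT (a aa c : ℝ) (h : V → V → ℝ) (hh : IsBilin h) (x y : V) :
    RicS n b g (TT g a aa c h) x y
      = a * h x y + aa * (h x y - trg n b g h * g x y)
        + c * (n * h x y - h x y) := by
  have e1 : ∑ i, ∑ j, ginv n b g i j * (g y (b j) * h x (b i)) = h x y := by
    have := contract₁ n b g hgb hgs hgnd (fun p q => h q p) (isBilin_swap hh) y x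
    simpa using this
  have e2 : ∑ i, ∑ j, ginv n b g i j * (g y (b i) * h x (b j)) = h x y :=
    contract₂ n b g hgb hgs hgnd (fun p q => h q p) (isBilin_swap hh) y x
  have e3 : ∑ i, ∑ j, ginv n b g i j * g (b i) (b j) = (n : ℝ) :=
    trg_g_eq n b g hgb hgs hgnd
  have e4 : ∑ i, ∑ j, ginv n b g i j * h (b i) (b j) = trg n b g h := rfl
  have e5 : ∑ i, ∑ j, ginv n b g i j * (g x (b j) * h (b i) y) = h x y :=
    contract₁ n b g hgb hgs hgnd h hh x y
  calc RicS n b g (TT g a aa c h) x y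
      = ∑ i, ∑ j, (a * (ginv n b g i j * (g y (b j) * h x (b i)))
          + aa * (ginv n b g i j * (g y (b i) * h x (b j)))
          - aa * g x y * (ginv n b g i j * h (b i) (b j))
          + c * h x y * (ginv n b g i j * g (b i) (b j))
          - c * (ginv n b g i j * (g x (b j) * h (b i) y))) := by
        unfold RicS TT
        refine Finset.sum_congr rfl fun i _ => Finset.sum_congr rfl fun j _ => ?_
        rw [hgs (b j) y, hgs (b i) y]
        ring
  _ = a * h x y + aa * (h x y - trg n b g h * g x y) + c * (n * h x y - h x y) := by
        simp only [Finset.sum_add_distrib, Finset.sum_sub_distrib, ← Finset.mul_sum]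
        rw [e1, e2, e3, e4, e5]
        ring

lemma tau_TT (a aa c : ℝ) (h : V → V → ℝ) (hh : IsBilin h) (htr : trg n b g h = 0) :
    tau n b g (TT g a aa c h) = 0 := by
  rw [tau_eq_trg_Ric n b g hgb hgs hgnd]
  have h2 : trg n b g (Ric n b g (TT g a aa c h))
      = trg n b g (fun x y => a * h y x + (aa * (1 - (n:ℝ)) - c) * h x y) := by
    congr 1
    funext x y
    rw [Ric_TT n b g hgb hgs hgnd a aa c h hh, htr]
    ring
  rw [h2]
  calc trg n b g (fun x y => a * h y x + (aa * (1 - (n:ℝ)) - c) * h x y)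
      = a * trg n b g (fun x y => h y x) + (aa * (1 - (n:ℝ)) - c) * trg n b g h :=
        trg_comb n b g hgb hgs hgnd a (aa * (1 - (n:ℝ)) - c) (fun p q => h q p) h
  _ = 0 := by rw [trg_swap n b g hgb hgs hgnd, htr]; ring

lemma Ric_add (F G : V → V → V → V → ℝ) (x y : V) :
    Ric n b g (F + G) x y = Ric n b g F x y + Ric n b g G x y := by
  unfold Ric
  simp [Pi.add_apply, mul_add, Finset.sum_add_distrib]

lemma RicS_add (F G : V → V → V → V → ℝ) (x y : V) :
    RicS n b g (F + G) x y = RicS n b g F x y + RicS n b g G x y := by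
  unfold RicS
  simp [Pi.add_apply, mul_add, Finset.sum_add_distrib]

lemma Ric_isBilin (F : V → V → V → V → ℝ) (hF : IsMulti4 F) : IsBilin (Ric n b g F) := by
  constructor
  · intro y
    constructor
    · intro u v
      have h1 : ∀ (i j : Fin n), ginv n b g i j * F (b i) (u + v) y (b j)
          = ginv n b g i j * F (b i) u y (b j) + ginv n b g i j * F (b i) v y (b j) := by
        intro i j; simp only [(hF.2.1 (b i) y (b j)).1]; ring
      simp only [Ric, h1, Finset.sum_add_distrib]
    · intro s u
      have h1 : ∀ (i j : Fin n), ginv n b g i j * F (b i) (s • u) y (b j)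
          = s * (ginv n b g i j * F (b i) u y (b j)) := by
        intro i j; simp only [(hF.2.1 (b i) y (b j)).2]; ring
      simp only [Ric, h1, ← Finset.mul_sum]
  · intro x
    constructor
    · intro u v
      have h1 : ∀ (i j : Fin n), ginv n b g i j * F (b i) x (u + v) (b j)
          = ginv n b g i j * F (b i) x u (b j) + ginv n b g i j * F (b i) x v (b j) := by
        intro i j; simp only [(hF.2.2.1 (b i) x (b j)).1]; ring
      simp only [Ric, h1, Finset.sum_add_distrib]
    · intro s u
      have h1 : ∀ (i j : Fin n), ginv n b g i j * F (b i) x (s • u) (b j)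
          = s * (ginv n b g i j * F (b i) x u (b j)) := by
        intro i j; simp only [(hF.2.2.1 (b i) x (b j)).2]; ring
      simp only [Ric, h1, ← Finset.mul_sum]

lemma RicS_isBilin (F : V → V → V → V → ℝ) (hF : IsMulti4 F) : IsBilin (RicS n b g F) := by
  constructor
  · intro y
    constructor
    · intro u v
      have h1 : ∀ (i j : Fin n), ginv n b g i j * F (u + v) (b i) (b j) y
          = ginv n b g i j * F u (b i) (b j) y + ginv n b g i j * F v (b i) (b j) y := by
        intro i j; simp only [(hF.1 (b i) (b j) y).1]; ring
      simp only [RicS, h1, Finset.sum_add_distrib]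
    · intro s u
      have h1 : ∀ (i j : Fin n), ginv n b g i j * F (s • u) (b i) (b j) y
          = s * (ginv n b g i j * F u (b i) (b j) y) := by
        intro i j; simp only [(hF.1 (b i) (b j) y).2]; ring
      simp only [RicS, h1, ← Finset.mul_sum]
  · intro x
    constructor
    · intro u v
      have h1 : ∀ (i j : Fin n), ginv n b g i j * F x (b i) (b j) (u + v)
          = ginv n b g i j * F x (b i) (b j) u + ginv n b g i j * F x (b i) (b j) v := by
        intro i j; simp only [(hF.2.2.2 x (b i) (b j)).1]; ring
      simp only [RicS, h1, Finset.sum_add_distrib]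
    · intro s u
      have h1 : ∀ (i j : Fin n), ginv n b g i j * F x (b i) (b j) (s • u)
          = s * (ginv n b g i j * F x (b i) (b j) u) := by
        intro i j; simp only [(hF.2.2.2 x (b i) (b j)).2]; ring
      simp only [RicS, h1, ← Finset.mul_sum]

end Aux2

section Aux3
open Matrix
set_option linter.unusedSectionVars false
set_option maxHeartbeats 1000000

variable {V : Type*} [AddCommGroup V] [Module ℝ V]
variable (n : ℕ) (b : Module.Basis (Fin n) ℝ V) (g : V → V → ℝ)

/-- Traceless symmetric bilinear forms. -/
def TL (p : V → V → ℝ) : Prop :=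
  IsBilin p ∧ (∀ x y, p x y = p y x) ∧ trg n b g p = 0

/-- Antisymmetric bilinear forms. -/
def TA (p : V → V → ℝ) : Prop :=
  IsBilin p ∧ (∀ x y, p x y = - p y x)

/-- Normal form bilinear forms built from g, Ric, RicS. -/
noncomputable def NF (F : V → V → V → V → ℝ) (c1 c2 c3 c4 c5 : ℝ) : V → V → ℝ :=
  fun x y => c1 * g x y + c2 * Ric n b g F x y + c3 * Ric n b g F y x
    + c4 * RicS n b g F x y + c5 * RicS n b g F y x

variable (hgb : IsBilin g) (hgs : ∀ x y, g x y = g y x)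
    (hgnd : ∀ x : V, (∀ y : V, g x y = 0) → x = 0)

include hgb hgs hgnd

lemma NF_bilin (F : V → V → V → V → ℝ) (hF : IsMulti4 F) (c1 c2 c3 c4 c5 : ℝ) :
    IsBilin (NF n b g F c1 c2 c3 c4 c5) := by
  have R := Ric_isBilin n b g hgb hgs hgnd F hF
  have S := RicS_isBilin n b g hgb hgs hgnd F hF
  refine ⟨fun y => ⟨fun u v => ?_, fun s u => ?_⟩, fun x => ⟨fun u v => ?_, fun s u => ?_⟩⟩ <;>
    simp only [NF]
  · simp only [(hgb.1 y).1, (R.1 y).1, (R.2 y).1, (S.1 y).1, (S.2 y).1]; ring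
  · simp only [(hgb.1 y).2, (R.1 y).2, (R.2 y).2, (S.1 y).2, (S.2 y).2]; ring
  · simp only [(hgb.2 x).1, (R.2 x).1, (R.1 x).1, (S.2 x).1, (S.1 x).1]; ring
  · simp only [(hgb.2 x).2, (R.2 x).2, (R.1 x).2, (S.2 x).2, (S.1 x).2]; ring

lemma NF_trg (F : V → V → V → V → ℝ) (c1 c2 c3 c4 c5 : ℝ) :
    trg n b g (NF n b g F c1 c2 c3 c4 c5)
      = c1 * n + (c2 + c3 + c4 + c5) * tau n b g F := by
  have key : trg n b g (NF n b g F c1 c2 c3 c4 c5)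
      = c1 * trg n b g g + c2 * trg n b g (Ric n b g F)
        + c3 * trg n b g (fun x y => Ric n b g F y x)
        + c4 * trg n b g (RicS n b g F)
        + c5 * trg n b g (fun x y => RicS n b g F y x) := by
    unfold trg NF
    simp only [Finset.mul_sum, ← Finset.sum_add_distrib]
    exact Finset.sum_congr rfl fun i _ => Finset.sum_congr rfl fun j _ => by ring
  rw [key, trg_g_eq n b g hgb hgs hgnd, ← tau_eq_trg_Ric n b g hgb hgs hgnd,
    trg_swap n b g hgb hgs hgnd (Ric n b g F),
    trg_swap n b g hgb hgs hgnd (RicS n b g F),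
    ← tau_eq_trg_Ric n b g hgb hgs hgnd, trg_RicS_eq_tau n b g hgb hgs hgnd]
  ring

lemma NF_symm (F : V → V → V → V → ℝ) (c1 c2 c4 : ℝ) :
    ∀ x y, NF n b g F c1 c2 c2 c4 c4 x y = NF n b g F c1 c2 c2 c4 c4 y x := by
  intro x y
  simp only [NF]
  rw [hgs x y]
  ring

lemma NF_anti (F : V → V → V → V → ℝ) (c2 c4 : ℝ) :
    ∀ x y, NF n b g F 0 c2 (-c2) c4 (-c4) x y = - NF n b g F 0 c2 (-c2) c4 (-c4) y x := by
  intro x y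
  simp only [NF]
  ring

lemma TL_NF (F : V → V → V → V → ℝ) (hF : IsMulti4 F) (c1 c2 c4 : ℝ)
    (hc : c1 * n + (2*c2 + 2*c4) * tau n b g F = 0) :
    TL n b g (NF n b g F c1 c2 c2 c4 c4) := by
  refine ⟨NF_bilin n b g hgb hgs hgnd F hF _ _ _ _ _, NF_symm n b g hgb hgs hgnd F c1 c2 c4, ?_⟩
  rw [NF_trg n b g hgb hgs hgnd]
  linarith

lemma TA_NF (F : V → V → V → V → ℝ) (hF : IsMulti4 F) (c2 c4 : ℝ) :
    TA (NF n b g F 0 c2 (-c2) c4 (-c4)) :=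
  ⟨NF_bilin n b g hgb hgs hgnd F hF _ _ _ _ _, NF_anti n b g hgb hgs hgnd F c2 c4⟩

lemma TA_trg (p : V → V → ℝ) (hp : TA p) : trg n b g p = 0 :=
  trg_anti n b g hgb hgs hgnd p hp.2

lemma TL_comb (s t : ℝ) {p q : V → V → ℝ} (hp : TL n b g p) (hq : TL n b g q) :
    TL n b g (fun x y => s * p x y + t * q x y) := by
  refine ⟨isBilin_comb s t hp.1 hq.1, fun x y => ?_, ?_⟩
  · simp only []
    rw [hp.2.1 x y, hq.2.1 x y]
  · rw [trg_comb n b g hgb hgs hgnd, hp.2.2, hq.2.2]; ring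

lemma TA_comb (s t : ℝ) {p q : V → V → ℝ} (hp : TA p) (hq : TA q) :
    TA (fun x y => s * p x y + t * q x y) := by
  refine ⟨isBilin_comb s t hp.1 hq.1, fun x y => ?_⟩
  simp only []
  rw [hp.2 x y, hq.2 x y]; ring

end Aux3

section Aux4
open Matrix
set_option linter.unusedSectionVars false
set_option maxHeartbeats 3000000

variable {V : Type*} [AddCommGroup V] [Module ℝ V]
variable (n : ℕ)

lemma nz_facts (hn : 3 ≤ n) : ((n:ℝ) ≠ 0) ∧ ((n:ℝ) - 1 ≠ 0) ∧ ((n:ℝ) - 2 ≠ 0)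
    ∧ ((n:ℝ) + 1 ≠ 0) ∧ ((n:ℝ) + 2 ≠ 0) ∧ ((n:ℝ)^2 - 4 ≠ 0) := by
  have h3 : (3:ℝ) ≤ (n:ℝ) := by exact_mod_cast hn
  refine ⟨?_,?_,?_,?_,?_,?_⟩ <;> intro h <;> nlinarith

variable (b : Module.Basis (Fin n) ℝ V) (g : V → V → ℝ)
variable (hgb : IsBilin g) (hgs : ∀ x y, g x y = g y x)
    (hgnd : ∀ x : V, (∀ y : V, g x y = 0) → x = 0)

include hgb hgs hgnd

lemma mem_rSet_TT_anti' (a aa c : ℝ) (ω : V → V → ℝ) (hh : IsBilin ω)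
    (hanti : ∀ x y, ω x y = - ω y x) (ha : a = 2 * aa) : TT g a aa c ω ∈ rSet V := by
  subst ha; exact mem_rSet_TT_anti g hgb hgs hgnd aa c ω hh hanti

/-! ### value lemmas -/

lemma pi2_val (hn : 3 ≤ n) (F : V → V → V → V → ℝ) (hF : F ∈ rSet V) :
    ∃ p, TL n b g p ∧ pi2 n b g F = TT g 0 1 0 p := by
  obtain ⟨h0, h1, h2, hq1, hq2, h4⟩ := nz_facts n hn
  refine ⟨NF n b g F (tau n b g F/((n:ℝ)*((n:ℝ)-1))) (-(1/(2*((n:ℝ)-1))))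
      (-(1/(2*((n:ℝ)-1)))) 0 0, TL_NF n b g hgb hgs hgnd F hF.1 _ _ _ (by field_simp; ring), ?_⟩
  funext x y z w
  simp only [pi2, TT, NF, wedge, symB, Pi.smul_apply, Pi.sub_apply, smul_eq_mul]
  field_simp
  ring

lemma pi5_val (hn : 3 ≤ n) (F : V → V → V → V → ℝ) (hF : F ∈ rSet V) :
    ∃ p, TL n b g p ∧ pi5 n b g F = TT g 0 1 (1-(n:ℝ)) p := by
  obtain ⟨h0, h1, h2, hq1, hq2, h4⟩ := nz_facts n hn
  refine ⟨NF n b g F (tau n b g F/((n:ℝ)*((n:ℝ)-1)*((n:ℝ)-2)))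
      (-(1/(2*(n:ℝ)*((n:ℝ)-1)*((n:ℝ)-2)))) (-(1/(2*(n:ℝ)*((n:ℝ)-1)*((n:ℝ)-2))))
      (-(1/(2*(n:ℝ)*((n:ℝ)-2)))) (-(1/(2*(n:ℝ)*((n:ℝ)-2)))),
    TL_NF n b g hgb hgs hgnd F hF.1 _ _ _ (by field_simp; ring), ?_⟩
  funext x y z w
  simp only [pi5, TT, NF, wedge, symB, Pi.smul_apply, Pi.sub_apply, Pi.add_apply, smul_eq_mul]
  field_simp
  ring

lemma al2_val (hn : 3 ≤ n) (F : V → V → V → V → ℝ) (hF : F ∈ rSet V) :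
    ∃ p, TL n b g p ∧ al2 n b g F = TT g 0 1 (-1) p := by
  obtain ⟨h0, h1, h2, hq1, hq2, h4⟩ := nz_facts n hn
  refine ⟨NF n b g F (tau n b g F/((n:ℝ)*((n:ℝ)-2))) (-(1/(4*((n:ℝ)-2))))
      (-(1/(4*((n:ℝ)-2)))) (-(1/(4*((n:ℝ)-2)))) (-(1/(4*((n:ℝ)-2)))),
    TL_NF n b g hgb hgs hgnd F hF.1 _ _ _ (by field_simp; ring), ?_⟩
  funext x y z w
  simp only [al2, TT, NF, wedge, symB, Pi.smul_apply, Pi.sub_apply, Pi.add_apply, smul_eq_mul]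
  field_simp
  ring

lemma al3_val (hn : 3 ≤ n) (F : V → V → V → V → ℝ) (hF : F ∈ rSet V) :
    ∃ p, TL n b g p ∧ al3 n b g F = TT g 0 1 1 p := by
  obtain ⟨h0, h1, h2, hq1, hq2, h4⟩ := nz_facts n hn
  refine ⟨NF n b g F 0 (-(1/(4*(n:ℝ)))) (-(1/(4*(n:ℝ)))) (1/(4*(n:ℝ))) (1/(4*(n:ℝ))), ?_, ?_⟩
  · refine ⟨NF_bilin n b g hgb hgs hgnd F hF.1 _ _ _ _ _,
      NF_symm n b g hgb hgs hgnd F _ _ _, ?_⟩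
    rw [NF_trg n b g hgb hgs hgnd]
    ring
  funext x y z w
  simp only [al3, TT, NF, wedge, symB, Pi.smul_apply, Pi.sub_apply, Pi.add_apply, smul_eq_mul]
  field_simp
  ring

lemma pi3_val (hn : 3 ≤ n) (F : V → V → V → V → ℝ) (hF : F ∈ rSet V) :
    ∃ p, TA p ∧ pi3 n b g F = TT g 2 1 0 p := by
  obtain ⟨h0, h1, h2, hq1, hq2, h4⟩ := nz_facts n hn
  refine ⟨NF n b g F 0 (-(1/(2*((n:ℝ)+1)))) (-(-(1/(2*((n:ℝ)+1))))) 0 (-(0:ℝ)),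
    TA_NF n b g hgb hgs hgnd F hF.1 _ _, ?_⟩
  funext x y z w
  simp only [pi3, TT, NF, wedge, prodB, lamB, Pi.smul_apply, Pi.sub_apply, Pi.add_apply,
    smul_eq_mul]
  field_simp
  ring

lemma pi4_val (hn : 3 ≤ n) (F : V → V → V → V → ℝ) (hF : F ∈ rSet V) :
    ∃ p, TA p ∧ pi4 n b g F = TT g 2 1 (-((n:ℝ)+1)) p := by
  obtain ⟨h0, h1, h2, hq1, hq2, h4⟩ := nz_facts n hn
  refine ⟨NF n b g F 0 (-(3/(2*((n:ℝ)+1)*((n:ℝ)^2-4)))) (-(-(3/(2*((n:ℝ)+1)*((n:ℝ)^2-4)))))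
      (-(1/(2*((n:ℝ)^2-4)))) (-(-(1/(2*((n:ℝ)^2-4))))),
    TA_NF n b g hgb hgs hgnd F hF.1 _ _, ?_⟩
  funext x y z w
  simp only [pi4, TT, NF, wedge, prodB, lamB, Pi.smul_apply, Pi.sub_apply, Pi.add_apply,
    smul_eq_mul]
  field_simp
  ring

lemma al4_val (hn : 3 ≤ n) (F : V → V → V → V → ℝ) (hF : F ∈ rSet V) :
    ∃ p, TA p ∧ al4 n b g F = TT g 2 1 1 p := by
  obtain ⟨h0, h1, h2, hq1, hq2, h4⟩ := nz_facts n hn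
  refine ⟨NF n b g F 0 (-(3/(8*((n:ℝ)+2)))) (-(-(3/(8*((n:ℝ)+2))))) (1/(8*((n:ℝ)+2)))
      (-(1/(8*((n:ℝ)+2)))),
    TA_NF n b g hgb hgs hgnd F hF.1 _ _, ?_⟩
  funext x y z w
  simp only [al4, TT, NF, wedge, prodB, lamB, Pi.smul_apply, Pi.sub_apply, Pi.add_apply,
    smul_eq_mul]
  field_simp
  ring

lemma al5_val (hn : 3 ≤ n) (F : V → V → V → V → ℝ) (hF : F ∈ rSet V) :
    ∃ p, TA p ∧ al5 n b g F = TT g 2 1 (-3) p := by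
  obtain ⟨h0, h1, h2, hq1, hq2, h4⟩ := nz_facts n hn
  refine ⟨NF n b g F 0 (-(1/(8*((n:ℝ)-2)))) (-(-(1/(8*((n:ℝ)-2))))) (-(1/(8*((n:ℝ)-2))))
      (-(-(1/(8*((n:ℝ)-2))))),
    TA_NF n b g hgb hgs hgnd F hF.1 _ _, ?_⟩
  funext x y z w
  simp only [al5, TT, NF, wedge, prodB, lamB, Pi.smul_apply, Pi.sub_apply, Pi.add_apply,
    smul_eq_mul]
  field_simp
  ring

/-! ### preimage lemmas -/

lemma pi2_pre (hn : 3 ≤ n) (p : V → V → ℝ) (hp : TL n b g p) :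
    TT g 0 1 0 p ∈ rSet V ∧ pi2 n b g (TT g 0 1 0 p) = TT g 0 1 0 p := by
  obtain ⟨h0, h1, h2, hq1, hq2, h4⟩ := nz_facts n hn
  refine ⟨mem_rSet_TT_sym g hgb hgs hgnd 1 0 p hp.1 hp.2.1, ?_⟩
  funext x y z w
  simp only [pi2, TT, wedge, symB, Pi.smul_apply, Pi.sub_apply, smul_eq_mul]
  rw [tau_TT n b g hgb hgs hgnd 0 1 0 p hp.1 hp.2.2]
  simp only [Ric_TT n b g hgb hgs hgnd 0 1 0 p hp.1, hp.2.2,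
    hp.2.1 z x, hp.2.1 z y, hp.2.1 w x, hp.2.1 w y]
  field_simp
  ring

lemma pi5_pre (hn : 3 ≤ n) (p : V → V → ℝ) (hp : TL n b g p) :
    TT g 0 ((n:ℝ)-1) (1-(n:ℝ)) p ∈ rSet V ∧
      pi5 n b g (TT g 0 ((n:ℝ)-1) (1-(n:ℝ)) p) = TT g 0 1 (1-(n:ℝ)) p := by
  obtain ⟨h0, h1, h2, hq1, hq2, h4⟩ := nz_facts n hn
  refine ⟨mem_rSet_TT_sym g hgb hgs hgnd ((n:ℝ)-1) (1-(n:ℝ)) p hp.1 hp.2.1, ?_⟩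
  funext x y z w
  simp only [pi5, TT, wedge, symB, Pi.smul_apply, Pi.sub_apply, Pi.add_apply, smul_eq_mul]
  rw [tau_TT n b g hgb hgs hgnd 0 ((n:ℝ)-1) (1-(n:ℝ)) p hp.1 hp.2.2]
  simp only [Ric_TT n b g hgb hgs hgnd 0 ((n:ℝ)-1) (1-(n:ℝ)) p hp.1,
    RicS_TT n b g hgb hgs hgnd 0 ((n:ℝ)-1) (1-(n:ℝ)) p hp.1, hp.2.2,
    hp.2.1 z x, hp.2.1 z y, hp.2.1 w x, hp.2.1 w y]
  field_simp
  ring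

lemma al2_pre (hn : 3 ≤ n) (p : V → V → ℝ) (hp : TL n b g p) :
    TT g 0 2 0 p ∈ rSet V ∧ al2 n b g (TT g 0 2 0 p) = TT g 0 1 (-1) p := by
  obtain ⟨h0, h1, h2, hq1, hq2, h4⟩ := nz_facts n hn
  refine ⟨mem_rSet_TT_sym g hgb hgs hgnd 2 0 p hp.1 hp.2.1, ?_⟩
  funext x y z w
  simp only [al2, TT, wedge, symB, Pi.smul_apply, Pi.sub_apply, Pi.add_apply, smul_eq_mul]
  rw [tau_TT n b g hgb hgs hgnd 0 2 0 p hp.1 hp.2.2]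
  simp only [Ric_TT n b g hgb hgs hgnd 0 2 0 p hp.1,
    RicS_TT n b g hgb hgs hgnd 0 2 0 p hp.1, hp.2.2,
    hp.2.1 z x, hp.2.1 z y, hp.2.1 w x, hp.2.1 w y]
  field_simp
  ring

lemma al3_pre (hn : 3 ≤ n) (p : V → V → ℝ) (hp : TL n b g p) :
    al3 n b g (TT g 0 2 0 p) = TT g 0 1 1 p := by
  obtain ⟨h0, h1, h2, hq1, hq2, h4⟩ := nz_facts n hn
  funext x y z w
  simp only [al3, TT, wedge, symB, Pi.smul_apply, Pi.sub_apply, Pi.add_apply, smul_eq_mul]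
  simp only [Ric_TT n b g hgb hgs hgnd 0 2 0 p hp.1,
    RicS_TT n b g hgb hgs hgnd 0 2 0 p hp.1, hp.2.2,
    hp.2.1 z x, hp.2.1 z y, hp.2.1 w x, hp.2.1 w y]
  field_simp
  ring

lemma pi3_pre (hn : 3 ≤ n) (p : V → V → ℝ) (hp : TA p) :
    TT g 2 1 0 p ∈ rSet V ∧ pi3 n b g (TT g 2 1 0 p) = TT g 2 1 0 p := by
  obtain ⟨h0, h1, h2, hq1, hq2, h4⟩ := nz_facts n hn
  have htr := TA_trg n b g hgb hgs hgnd p hp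
  refine ⟨mem_rSet_TT_anti' g hgb hgs hgnd 2 1 0 p hp.1 hp.2 (by norm_num), ?_⟩
  funext x y z w
  simp only [pi3, TT, wedge, prodB, lamB, Pi.smul_apply, Pi.sub_apply, Pi.add_apply, smul_eq_mul]
  simp only [Ric_TT n b g hgb hgs hgnd 2 1 0 p hp.1, htr,
    hp.2 y x, hp.2 z x, hp.2 z y, hp.2 w x, hp.2 w y, hp.2 w z]
  field_simp
  ring

lemma pi4_pre (hn : 3 ≤ n) (p : V → V → ℝ) (hp : TA p) :
    TT g 2 1 (-((n:ℝ)+1)) p ∈ rSet V ∧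
      pi4 n b g (TT g 2 1 (-((n:ℝ)+1)) p) = TT g 2 1 (-((n:ℝ)+1)) p := by
  obtain ⟨h0, h1, h2, hq1, hq2, h4⟩ := nz_facts n hn
  have htr := TA_trg n b g hgb hgs hgnd p hp
  refine ⟨mem_rSet_TT_anti' g hgb hgs hgnd 2 1 (-((n:ℝ)+1)) p hp.1 hp.2 (by norm_num), ?_⟩
  funext x y z w
  simp only [pi4, TT, wedge, prodB, lamB, Pi.smul_apply, Pi.sub_apply, Pi.add_apply, smul_eq_mul]
  simp only [Ric_TT n b g hgb hgs hgnd 2 1 (-((n:ℝ)+1)) p hp.1,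
    RicS_TT n b g hgb hgs hgnd 2 1 (-((n:ℝ)+1)) p hp.1, htr,
    hp.2 y x, hp.2 z x, hp.2 z y, hp.2 w x, hp.2 w y, hp.2 w z]
  field_simp
  ring

lemma al4_pre (hn : 3 ≤ n) (p : V → V → ℝ) (hp : TA p) :
    TT g 0 0 4 p ∈ rSet V ∧ al4 n b g (TT g 0 0 4 p) = TT g 2 1 1 p := by
  obtain ⟨h0, h1, h2, hq1, hq2, h4⟩ := nz_facts n hn
  have htr := TA_trg n b g hgb hgs hgnd p hp
  refine ⟨mem_rSet_TT_anti' g hgb hgs hgnd 0 0 4 p hp.1 hp.2 (by norm_num), ?_⟩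
  funext x y z w
  simp only [al4, TT, wedge, prodB, lamB, Pi.smul_apply, Pi.sub_apply, Pi.add_apply, smul_eq_mul]
  simp only [Ric_TT n b g hgb hgs hgnd 0 0 4 p hp.1,
    RicS_TT n b g hgb hgs hgnd 0 0 4 p hp.1, htr,
    hp.2 y x, hp.2 z x, hp.2 z y, hp.2 w x, hp.2 w y, hp.2 w z]
  field_simp
  ring

lemma al5_pre (hn : 3 ≤ n) (p : V → V → ℝ) (hp : TA p) :
    TT g 0 0 (-4) p ∈ rSet V ∧ al5 n b g (TT g 0 0 (-4) p) = TT g 2 1 (-3) p := by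
  obtain ⟨h0, h1, h2, hq1, hq2, h4⟩ := nz_facts n hn
  have htr := TA_trg n b g hgb hgs hgnd p hp
  refine ⟨mem_rSet_TT_anti' g hgb hgs hgnd 0 0 (-4) p hp.1 hp.2 (by norm_num), ?_⟩
  funext x y z w
  simp only [al5, TT, wedge, prodB, lamB, Pi.smul_apply, Pi.sub_apply, Pi.add_apply, smul_eq_mul]
  simp only [Ric_TT n b g hgb hgs hgnd 0 0 (-4) p hp.1,
    RicS_TT n b g hgb hgs hgnd 0 0 (-4) p hp.1, htr,
    hp.2 y x, hp.2 z x, hp.2 z y, hp.2 w x, hp.2 w y, hp.2 w z]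
  field_simp
  ring

end Aux4

set_option maxHeartbeats 4000000 in
theorem stmt17 {V : Type*} [AddCommGroup V] [Module ℝ V]
    (n : ℕ) (hn : 3 ≤ n) (b : Module.Basis (Fin n) ℝ V)
    (g : V → V → ℝ) (hgb : IsBilin g) (hgs : ∀ x y, g x y = g y x)
    (hgnd : ∀ x : V, (∀ y : V, g x y = 0) → x = 0) :
    al1 n b g '' rSet V = pi1 n b g '' rSet V ∧
    (pi2 n b g '' rSet V) + (pi5 n b g '' rSet V)
      = (al2 n b g '' rSet V) + (al3 n b g '' rSet V) ∧
    (∀ u ∈ pi2 n b g '' rSet V, ∀ v ∈ pi5 n b g '' rSet V,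
      ∀ u' ∈ pi2 n b g '' rSet V, ∀ v' ∈ pi5 n b g '' rSet V,
        u + v = u' + v' → u = u' ∧ v = v') ∧
    (∀ u ∈ al2 n b g '' rSet V, ∀ v ∈ al3 n b g '' rSet V,
      ∀ u' ∈ al2 n b g '' rSet V, ∀ v' ∈ al3 n b g '' rSet V,
        u + v = u' + v' → u = u' ∧ v = v') ∧
    (pi3 n b g '' rSet V) + (pi4 n b g '' rSet V)
      = (al4 n b g '' rSet V) + (al5 n b g '' rSet V) ∧
    (∀ u ∈ pi3 n b g '' rSet V, ∀ v ∈ pi4 n b g '' rSet V,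
      ∀ u' ∈ pi3 n b g '' rSet V, ∀ v' ∈ pi4 n b g '' rSet V,
        u + v = u' + v' → u = u' ∧ v = v') ∧
    (∀ u ∈ al4 n b g '' rSet V, ∀ v ∈ al5 n b g '' rSet V,
      ∀ u' ∈ al4 n b g '' rSet V, ∀ v' ∈ al5 n b g '' rSet V,
        u + v = u' + v' → u = u' ∧ v = v') ∧
    al6 n b g '' rSet V = pi6 n b g '' rSet V ∧
    al7 n b g '' rSet V = pi7 n b g '' rSet V ∧
    al8 n b g '' rSet V = pi8 n b g '' rSet V := by
  obtain ⟨h0, h1, h2, hq1, hq2, h4⟩ := nz_facts n hn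
  have hfun6 : al6 n b g = pi6 n b g := by
    funext F x y z w
    simp only [al6, pi6, al1, al2, psi, wedge, symB, prodB, lamB, Pi.add_apply,
      Pi.sub_apply, Pi.smul_apply, smul_eq_mul]
    field_simp
    ring
  have hfun7 : al7 n b g = pi7 n b g := by
    funext F x y z w
    simp only [al7, pi7, al3, al4, mu, wedge, symB, prodB, lamB, Pi.add_apply,
      Pi.sub_apply, Pi.smul_apply, smul_eq_mul]
    field_simp
    ring
  have hfun8 : al8 n b g = pi8 n b g := by
    funext F x y z w
    simp only [al8, pi8, al5, psi, mu, wedge, symB, prodB, lamB, Pi.add_apply,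
      Pi.sub_apply, Pi.smul_apply, smul_eq_mul]
    field_simp
    ring
  refine ⟨rfl, ?_, ?_, ?_, ?_, ?_, ?_, by rw [hfun6], by rw [hfun7], by rw [hfun8]⟩
  -- sum equality, symmetric sector
  · apply Set.Subset.antisymm
    · rintro X hX
      rw [Set.mem_add] at hX ⊢
      obtain ⟨u, hu, v, hv, huv⟩ := hX
      obtain ⟨F, hF, rfl⟩ := hu
      obtain ⟨F', hF', rfl⟩ := hv
      obtain ⟨p, hp, hpe⟩ := pi2_val n b g hgb hgs hgnd hn F hF
      obtain ⟨q, hq, hqe⟩ := pi5_val n b g hgb hgs hgnd hn F' hF'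
      have hm1TL : TL n b g (fun x y => (1/2 : ℝ) * p x y + ((n:ℝ)/2) * q x y) :=
        TL_comb n b g hgb hgs hgnd _ _ hp hq
      have hm2TL : TL n b g (fun x y => (1/2 : ℝ) * p x y + (1 - (n:ℝ)/2) * q x y) :=
        TL_comb n b g hgb hgs hgnd _ _ hp hq
      obtain ⟨hmem1, hval1⟩ := al2_pre n b g hgb hgs hgnd hn _ hm1TL
      have hval2 := al3_pre n b g hgb hgs hgnd hn _ hm2TL
      have hmem2 := (al2_pre n b g hgb hgs hgnd hn _ hm2TL).1
      refine ⟨_, ⟨_, hmem1, hval1⟩, _, ⟨_, hmem2, hval2⟩, ?_⟩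
      rw [← huv, hpe, hqe]
      funext x y z w
      simp only [TT, Pi.add_apply]
      ring
    · rintro X hX
      rw [Set.mem_add] at hX ⊢
      obtain ⟨u, hu, v, hv, huv⟩ := hX
      obtain ⟨F, hF, rfl⟩ := hu
      obtain ⟨F', hF', rfl⟩ := hv
      obtain ⟨p, hp, hpe⟩ := al2_val n b g hgb hgs hgnd hn F hF
      obtain ⟨q, hq, hqe⟩ := al3_val n b g hgb hgs hgnd hn F' hF'
      have hqTL : TL n b g (fun x y => (1/((n:ℝ)-1)) * p x y + (-(1/((n:ℝ)-1))) * q x y) :=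
        TL_comb n b g hgb hgs hgnd _ _ hp hq
      have hpTL : TL n b g
          (fun x y => (1 - 1/((n:ℝ)-1)) * p x y + (1 + 1/((n:ℝ)-1)) * q x y) :=
        TL_comb n b g hgb hgs hgnd _ _ hp hq
      obtain ⟨hmem1, hval1⟩ := pi2_pre n b g hgb hgs hgnd hn _ hpTL
      obtain ⟨hmem2, hval2⟩ := pi5_pre n b g hgb hgs hgnd hn _ hqTL
      refine ⟨_, ⟨_, hmem1, hval1⟩, _, ⟨_, hmem2, hval2⟩, ?_⟩
      rw [← huv, hpe, hqe]
      funext x y z w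
      simp only [TT, Pi.add_apply]
      field_simp
      ring
  -- directness pi2/pi5
  · intro u hu v hv u' hu' v' hv' heq
    obtain ⟨F1, hF1, rfl⟩ := hu
    obtain ⟨F2, hF2, rfl⟩ := hv
    obtain ⟨F3, hF3, rfl⟩ := hu'
    obtain ⟨F4, hF4, rfl⟩ := hv'
    obtain ⟨p, hp, hpe⟩ := pi2_val n b g hgb hgs hgnd hn F1 hF1
    obtain ⟨q, hq, hqe⟩ := pi5_val n b g hgb hgs hgnd hn F2 hF2
    obtain ⟨p', hp', hpe'⟩ := pi2_val n b g hgb hgs hgnd hn F3 hF3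
    obtain ⟨q', hq', hqe'⟩ := pi5_val n b g hgb hgs hgnd hn F4 hF4
    have key : ∀ x y, p x y = p' x y := by
      intro x y
      have h : Ric n b g (pi2 n b g F1 + pi5 n b g F2) x y
          = Ric n b g (pi2 n b g F3 + pi5 n b g F4) x y := by rw [heq]
      rw [Ric_add n b g hgb hgs hgnd, Ric_add n b g hgb hgs hgnd, hpe, hqe, hpe', hqe'] at h
      rw [Ric_TT n b g hgb hgs hgnd 0 1 0 p hp.1,
        Ric_TT n b g hgb hgs hgnd 0 1 (1-(n:ℝ)) q hq.1,
        Ric_TT n b g hgb hgs hgnd 0 1 0 p' hp'.1,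
        Ric_TT n b g hgb hgs hgnd 0 1 (1-(n:ℝ)) q' hq'.1,
        hp.2.2, hq.2.2, hp'.2.2, hq'.2.2] at h
      have h2' : ((1:ℝ) - n) * p x y = ((1:ℝ) - n) * p' x y := by linear_combination h
      have hne : ((1:ℝ) - n) ≠ 0 := fun hh => h1 (by linarith)
      exact mul_left_cancel₀ hne h2'
    have hu_eq : pi2 n b g F1 = pi2 n b g F3 := by
      rw [hpe, hpe']
      funext x y z w
      simp only [TT]
      rw [key x y, key x z, key y z, key x w, key y w]
    refine ⟨hu_eq, ?_⟩
    rw [hu_eq] at heq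
    exact add_left_cancel heq
  -- directness al2/al3
  · intro u hu v hv u' hu' v' hv' heq
    obtain ⟨F1, hF1, rfl⟩ := hu
    obtain ⟨F2, hF2, rfl⟩ := hv
    obtain ⟨F3, hF3, rfl⟩ := hu'
    obtain ⟨F4, hF4, rfl⟩ := hv'
    obtain ⟨p, hp, hpe⟩ := al2_val n b g hgb hgs hgnd hn F1 hF1
    obtain ⟨q, hq, hqe⟩ := al3_val n b g hgb hgs hgnd hn F2 hF2
    obtain ⟨p', hp', hpe'⟩ := al2_val n b g hgb hgs hgnd hn F3 hF3
    obtain ⟨q', hq', hqe'⟩ := al3_val n b g hgb hgs hgnd hn F4 hF4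
    have key : ∀ x y, p x y = p' x y := by
      intro x y
      have h : Ric n b g (al2 n b g F1 + al3 n b g F2) x y
          = Ric n b g (al2 n b g F3 + al3 n b g F4) x y := by rw [heq]
      have h' : RicS n b g (al2 n b g F1 + al3 n b g F2) x y
          = RicS n b g (al2 n b g F3 + al3 n b g F4) x y := by rw [heq]
      rw [Ric_add n b g hgb hgs hgnd, Ric_add n b g hgb hgs hgnd, hpe, hqe, hpe', hqe'] at h
      rw [RicS_add n b g hgb hgs hgnd, RicS_add n b g hgb hgs hgnd, hpe, hqe, hpe', hqe'] at h'
      rw [Ric_TT n b g hgb hgs hgnd 0 1 (-1) p hp.1,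
        Ric_TT n b g hgb hgs hgnd 0 1 1 q hq.1,
        Ric_TT n b g hgb hgs hgnd 0 1 (-1) p' hp'.1,
        Ric_TT n b g hgb hgs hgnd 0 1 1 q' hq'.1,
        hp.2.2, hq.2.2, hp'.2.2, hq'.2.2] at h
      rw [RicS_TT n b g hgb hgs hgnd 0 1 (-1) p hp.1,
        RicS_TT n b g hgb hgs hgnd 0 1 1 q hq.1,
        RicS_TT n b g hgb hgs hgnd 0 1 (-1) p' hp'.1,
        RicS_TT n b g hgb hgs hgnd 0 1 1 q' hq'.1,
        hp.2.2, hq.2.2, hp'.2.2, hq'.2.2] at h'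
      have e : ((2:ℝ) - n) * (p x y - p' x y) = 0 := by
        linear_combination (1/2 : ℝ) * h + (1/2 : ℝ) * h'
      have hd := (mul_eq_zero.mp e).resolve_left (fun hh => h2 (by linarith))
      linarith
    have hu_eq : al2 n b g F1 = al2 n b g F3 := by
      rw [hpe, hpe']
      funext x y z w
      simp only [TT]
      rw [key x y, key x z, key y z, key x w, key y w]
    refine ⟨hu_eq, ?_⟩
    rw [hu_eq] at heq
    exact add_left_cancel heq
  -- sum equality, antisymmetric sector
  · apply Set.Subset.antisymm
    · rintro X hX
      rw [Set.mem_add] at hX ⊢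
      obtain ⟨u, hu, v, hv, huv⟩ := hX
      obtain ⟨F, hF, rfl⟩ := hu
      obtain ⟨F', hF', rfl⟩ := hv
      obtain ⟨p, hp, hpe⟩ := pi3_val n b g hgb hgs hgnd hn F hF
      obtain ⟨q, hq, hqe⟩ := pi4_val n b g hgb hgs hgnd hn F' hF'
      have hm1TA : TA (fun x y => (3/4 : ℝ) * p x y + ((2-(n:ℝ))/4) * q x y) :=
        TA_comb g hgb hgs hgnd _ _ hp hq
      have hm2TA : TA (fun x y => (1/4 : ℝ) * p x y + (((n:ℝ)+2)/4) * q x y) :=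
        TA_comb g hgb hgs hgnd _ _ hp hq
      obtain ⟨hmem1, hval1⟩ := al4_pre n b g hgb hgs hgnd hn _ hm1TA
      obtain ⟨hmem2, hval2⟩ := al5_pre n b g hgb hgs hgnd hn _ hm2TA
      refine ⟨_, ⟨_, hmem1, hval1⟩, _, ⟨_, hmem2, hval2⟩, ?_⟩
      rw [← huv, hpe, hqe]
      funext x y z w
      simp only [TT, Pi.add_apply]
      ring
    · rintro X hX
      rw [Set.mem_add] at hX ⊢
      obtain ⟨u, hu, v, hv, huv⟩ := hX
      obtain ⟨F, hF, rfl⟩ := hu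
      obtain ⟨F', hF', rfl⟩ := hv
      obtain ⟨p, hp, hpe⟩ := al4_val n b g hgb hgs hgnd hn F hF
      obtain ⟨q, hq, hqe⟩ := al5_val n b g hgb hgs hgnd hn F' hF'
      have hqTA : TA (fun x y => (-(1/((n:ℝ)+1))) * p x y + (3/((n:ℝ)+1)) * q x y) :=
        TA_comb g hgb hgs hgnd _ _ hp hq
      have hpTA : TA (fun x y => (1 + 1/((n:ℝ)+1)) * p x y + (1 - 3/((n:ℝ)+1)) * q x y) :=
        TA_comb g hgb hgs hgnd _ _ hp hq
      obtain ⟨hmem1, hval1⟩ := pi3_pre n b g hgb hgs hgnd hn _ hpTA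
      obtain ⟨hmem2, hval2⟩ := pi4_pre n b g hgb hgs hgnd hn _ hqTA
      refine ⟨_, ⟨_, hmem1, hval1⟩, _, ⟨_, hmem2, hval2⟩, ?_⟩
      rw [← huv, hpe, hqe]
      funext x y z w
      simp only [TT, Pi.add_apply]
      field_simp
      ring
  -- directness pi3/pi4
  · intro u hu v hv u' hu' v' hv' heq
    obtain ⟨F1, hF1, rfl⟩ := hu
    obtain ⟨F2, hF2, rfl⟩ := hv
    obtain ⟨F3, hF3, rfl⟩ := hu'
    obtain ⟨F4, hF4, rfl⟩ := hv'
    obtain ⟨p, hp, hpe⟩ := pi3_val n b g hgb hgs hgnd hn F1 hF1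
    obtain ⟨q, hq, hqe⟩ := pi4_val n b g hgb hgs hgnd hn F2 hF2
    obtain ⟨p', hp', hpe'⟩ := pi3_val n b g hgb hgs hgnd hn F3 hF3
    obtain ⟨q', hq', hqe'⟩ := pi4_val n b g hgb hgs hgnd hn F4 hF4
    have key : ∀ x y, p x y = p' x y := by
      intro x y
      have h : Ric n b g (pi3 n b g F1 + pi4 n b g F2) x y
          = Ric n b g (pi3 n b g F3 + pi4 n b g F4) x y := by rw [heq]
      rw [Ric_add n b g hgb hgs hgnd, Ric_add n b g hgb hgs hgnd, hpe, hqe, hpe', hqe'] at h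
      rw [Ric_TT n b g hgb hgs hgnd 2 1 0 p hp.1,
        Ric_TT n b g hgb hgs hgnd 2 1 (-((n:ℝ)+1)) q hq.1,
        Ric_TT n b g hgb hgs hgnd 2 1 0 p' hp'.1,
        Ric_TT n b g hgb hgs hgnd 2 1 (-((n:ℝ)+1)) q' hq'.1,
        TA_trg n b g hgb hgs hgnd p hp, TA_trg n b g hgb hgs hgnd q hq,
        TA_trg n b g hgb hgs hgnd p' hp', TA_trg n b g hgb hgs hgnd q' hq',
        hp.2 y x, hq.2 y x, hp'.2 y x, hq'.2 y x] at h
      have e : (-(n:ℝ) - 1) * (p x y - p' x y) = 0 := by linear_combination h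
      have hd := (mul_eq_zero.mp e).resolve_left (fun hh => hq1 (by linarith))
      linarith
    have hu_eq : pi3 n b g F1 = pi3 n b g F3 := by
      rw [hpe, hpe']
      funext x y z w
      simp only [TT]
      rw [key x y, key x z, key y z, key x w, key y w]
    refine ⟨hu_eq, ?_⟩
    rw [hu_eq] at heq
    exact add_left_cancel heq
  -- directness al4/al5
  · intro u hu v hv u' hu' v' hv' heq
    obtain ⟨F1, hF1, rfl⟩ := hu
    obtain ⟨F2, hF2, rfl⟩ := hv
    obtain ⟨F3, hF3, rfl⟩ := hu'
    obtain ⟨F4, hF4, rfl⟩ := hv'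
    obtain ⟨p, hp, hpe⟩ := al4_val n b g hgb hgs hgnd hn F1 hF1
    obtain ⟨q, hq, hqe⟩ := al5_val n b g hgb hgs hgnd hn F2 hF2
    obtain ⟨p', hp', hpe'⟩ := al4_val n b g hgb hgs hgnd hn F3 hF3
    obtain ⟨q', hq', hqe'⟩ := al5_val n b g hgb hgs hgnd hn F4 hF4
    have key : ∀ x y, p x y = p' x y ∧ q x y = q' x y := by
      intro x y
      have h : Ric n b g (al4 n b g F1 + al5 n b g F2) x y
          = Ric n b g (al4 n b g F3 + al5 n b g F4) x y := by rw [heq]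
      have h' : RicS n b g (al4 n b g F1 + al5 n b g F2) x y
          = RicS n b g (al4 n b g F3 + al5 n b g F4) x y := by rw [heq]
      rw [Ric_add n b g hgb hgs hgnd, Ric_add n b g hgb hgs hgnd, hpe, hqe, hpe', hqe'] at h
      rw [RicS_add n b g hgb hgs hgnd, RicS_add n b g hgb hgs hgnd, hpe, hqe, hpe', hqe'] at h'
      rw [Ric_TT n b g hgb hgs hgnd 2 1 1 p hp.1,
        Ric_TT n b g hgb hgs hgnd 2 1 (-3) q hq.1,
        Ric_TT n b g hgb hgs hgnd 2 1 1 p' hp'.1,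
        Ric_TT n b g hgb hgs hgnd 2 1 (-3) q' hq'.1,
        TA_trg n b g hgb hgs hgnd p hp, TA_trg n b g hgb hgs hgnd q hq,
        TA_trg n b g hgb hgs hgnd p' hp', TA_trg n b g hgb hgs hgnd q' hq',
        hp.2 y x, hq.2 y x, hp'.2 y x, hq'.2 y x] at h
      rw [RicS_TT n b g hgb hgs hgnd 2 1 1 p hp.1,
        RicS_TT n b g hgb hgs hgnd 2 1 (-3) q hq.1,
        RicS_TT n b g hgb hgs hgnd 2 1 1 p' hp'.1,
        RicS_TT n b g hgb hgs hgnd 2 1 (-3) q' hq'.1,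
        TA_trg n b g hgb hgs hgnd p hp, TA_trg n b g hgb hgs hgnd q hq,
        TA_trg n b g hgb hgs hgnd p' hp', TA_trg n b g hgb hgs hgnd q' hq'] at h'
      have e2 : ((8:ℝ) - 4*n) * (q x y - q' x y) = 0 := by linear_combination h + h'
      have hd2 : q x y = q' x y := by
        have := (mul_eq_zero.mp e2).resolve_left (fun hh => h2 (by linarith))
        linarith
      have e1 : (-(n:ℝ) - 2) * (p x y - p' x y) = 0 := by
        linear_combination h - ((2:ℝ) - n) * hd2
      have hd1 : p x y = p' x y := by
        have := (mul_eq_zero.mp e1).resolve_left (fun hh => hq2 (by linarith))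
        linarith
      exact ⟨hd1, hd2⟩
    have hu_eq : al4 n b g F1 = al4 n b g F3 := by
      rw [hpe, hpe']
      funext x y z w
      simp only [TT]
      rw [(key x y).1, (key x z).1, (key y z).1, (key x w).1, (key y w).1]
    refine ⟨hu_eq, ?_⟩
    rw [hu_eq] at heq
    exact add_left_cancel heq

end GCT
end
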